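/- Let p ≥ 1 and let F : [0,1] → ℂ be continuously differentiable. Then sup_{t ∈ [0,1]} |F(t)|^p ≤ ∫₀¹ |F(τ)|^p dτ + p (∫₀¹ |F(τ)|^p dτ)^{(p−1)/p} (∫₀¹ |F'(τ)|^p dτ)^{1/p}. -/

import Mathlib

open MeasureTheory Real

noncomputable section

lemma abs_re_inner_le (z w : ℂ) : |z.re * w.re + z.im * w.im| ≤ ‖z‖ * ‖w‖ := by
  have h : z.re * w.re + z.im * w.im = ((starRingEnd ℂ) z * w).re := by
    simp [Complex.mul_re, Complex.conj_re, Complex.conj_im]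
  rw [h]
  calc |((starRingEnd ℂ) z * w).re| ≤ ‖(starRingEnd ℂ) z * w‖ :=
        Complex.abs_re_le_norm _
    _ = ‖z‖ * ‖w‖ := by rw [norm_mul, Complex.norm_conj]

lemma memLp_of_continuousOn_Icc {f : ℝ → ℝ} (hf : ContinuousOn f (Set.Icc (0:ℝ) 1))
    (q : ENNReal) : MemLp f q (volume.restrict (Set.Ioc (0:ℝ) 1)) := by
  obtain ⟨C, hC⟩ := (isCompact_Icc).exists_bound_of_continuousOn hf
  refine MemLp.of_bound ((hf.mono Set.Ioc_subset_Icc_self).aestronglyMeasurable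
    measurableSet_Ioc) C ?_
  rw [ae_restrict_iff' measurableSet_Ioc]
  exact ae_of_all _ fun x hx => hC x (Set.Ioc_subset_Icc_self hx)

lemma holder_Icc {p : ℝ} (hp : 1 < p) {f g : ℝ → ℝ}
    (hf : ContinuousOn f (Set.Icc (0:ℝ) 1)) (hg : ContinuousOn g (Set.Icc (0:ℝ) 1))
    (hf0 : ∀ x, 0 ≤ f x) (hg0 : ∀ x, 0 ≤ g x) :
    (∫ τ in (0:ℝ)..1, f τ * g τ) ≤
      (∫ τ in (0:ℝ)..1, f τ ^ (p/(p-1))) ^ ((p-1)/p) * (∫ τ in (0:ℝ)..1, g τ ^ p) ^ (1/p) := by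
  have h01 : (0:ℝ) ≤ 1 := zero_le_one
  rw [intervalIntegral.integral_of_le h01, intervalIntegral.integral_of_le h01,
    intervalIntegral.integral_of_le h01]
  have hpq : (p/(p-1)).HolderConjugate p := (Real.holderConjugate_iff |>.2
    ⟨hp, by have : p - 1 ≠ 0 := by linarith
            field_simp; ring⟩).symm
  have := MeasureTheory.integral_mul_le_Lp_mul_Lq_of_nonneg hpq
    (μ := volume.restrict (Set.Ioc (0:ℝ) 1)) (f := f) (g := g)
    (ae_of_all _ hf0) (ae_of_all _ hg0)
    (memLp_of_continuousOn_Icc hf _) (memLp_of_continuousOn_Icc hg _)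
  have h1 : 1/(p/(p-1)) = (p-1)/p := by field_simp
  rw [h1] at this
  exact this

lemma core (p : ℝ) (hp : 1 ≤ p) (ε : ℝ) (hε : 0 < ε) (F F' : ℝ → ℂ)
    (hderiv : ∀ t ∈ Set.Icc (0:ℝ) 1, HasDerivAt F (F' t) t)
    (hcont : ContinuousOn F' (Set.Icc (0:ℝ) 1))
    (t : ℝ) (ht : t ∈ Set.Icc (0:ℝ) 1) :
    ‖F t‖ ^ p ≤ (∫ τ in (0:ℝ)..1, (Complex.normSq (F τ) + ε) ^ (p/2))
      + p * (∫ τ in (0:ℝ)..1, (Complex.normSq (F τ) + ε) ^ (p/2)) ^ ((p-1)/p)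
        * (∫ τ in (0:ℝ)..1, ‖F' τ‖ ^ p) ^ (1/p) := by
  set u : ℝ → ℝ := fun τ => Complex.normSq (F τ) with hu_def
  set g : ℝ → ℝ := fun τ => (u τ + ε) ^ (p/2) with hg_def
  set D : ℝ → ℝ := fun τ =>
    (2*((F τ).re*(F' τ).re + (F τ).im*(F' τ).im)) * (p/2) * (u τ + ε) ^ (p/2-1) with hD_def
  set I : ℝ := ∫ τ in (0:ℝ)..1, g τ with hI_def
  set B : ℝ := ∫ τ in (0:ℝ)..1, ‖F' τ‖ ^ p with hB_def
  set J : ℝ := ∫ τ in (0:ℝ)..1, (u τ + ε) ^ ((p-1)/2) * ‖F' τ‖ with hJ_def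
  have hpos : ∀ τ, 0 < u τ + ε := fun τ => add_pos_of_nonneg_of_pos (Complex.normSq_nonneg _) hε
  have huIcc : Set.uIcc (0:ℝ) 1 = Set.Icc 0 1 := Set.uIcc_of_le zero_le_one
  have hFc : ContinuousOn F (Set.Icc (0:ℝ) 1) :=
    fun τ hτ => (hderiv τ hτ).continuousAt.continuousWithinAt
  have huc : ContinuousOn u (Set.Icc (0:ℝ) 1) :=
    Complex.continuous_normSq.comp_continuousOn hFc
  have huec : ContinuousOn (fun τ => u τ + ε) (Set.Icc (0:ℝ) 1) := huc.add continuousOn_const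
  have hgc : ContinuousOn g (Set.Icc (0:ℝ) 1) :=
    huec.rpow_const (fun x _ => Or.inl (hpos x).ne')
  have hF'n : ContinuousOn (fun τ => ‖F' τ‖) (Set.Icc (0:ℝ) 1) := hcont.norm
  have hDc : ContinuousOn D (Set.Icc (0:ℝ) 1) := by
    apply ContinuousOn.mul
    apply ContinuousOn.mul
    · exact (continuousOn_const.mul
        (((Complex.continuous_re.comp_continuousOn hFc).mul
          (Complex.continuous_re.comp_continuousOn hcont)).add
        ((Complex.continuous_im.comp_continuousOn hFc).mul
          (Complex.continuous_im.comp_continuousOn hcont))))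
    · exact continuousOn_const
    · exact huec.rpow_const (fun x _ => Or.inl (hpos x).ne')
  have hJc : ContinuousOn (fun τ => (u τ + ε) ^ ((p-1)/2) * ‖F' τ‖) (Set.Icc (0:ℝ) 1) :=
    (huec.rpow_const (fun x _ => Or.inl (hpos x).ne')).mul hF'n
  have ii : ∀ {f : ℝ → ℝ}, ContinuousOn f (Set.Icc (0:ℝ) 1) →
      IntervalIntegrable f volume 0 1 :=
    fun h => ContinuousOn.intervalIntegrable (huIcc ▸ h)
  -- derivative of g
  have hgd : ∀ τ ∈ Set.Icc (0:ℝ) 1, HasDerivAt g (D τ) τ := by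
    intro τ hτ
    have hF := hderiv τ hτ
    have hre : HasDerivAt (fun x => (F x).re) ((F' τ).re) τ :=
      Complex.reCLM.hasFDerivAt.comp_hasDerivAt τ hF
    have him : HasDerivAt (fun x => (F x).im) ((F' τ).im) τ :=
      Complex.imCLM.hasFDerivAt.comp_hasDerivAt τ hF
    have hu : HasDerivAt u (2*((F τ).re*(F' τ).re + (F τ).im*(F' τ).im)) τ := by
      have h1 : HasDerivAt (fun x => (F x).re * (F x).re + (F x).im * (F x).im)
          ((F' τ).re * (F τ).re + (F τ).re * (F' τ).re + ((F' τ).im * (F τ).im + (F τ).im * (F' τ).im)) τ :=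
        (hre.mul hre).add (him.mul him)
      have h2 : u = fun x => (F x).re * (F x).re + (F x).im * (F x).im := by
        funext x; simp [hu_def, Complex.normSq_apply]
      rw [h2]
      convert h1 using 1; ring
    have := (hu.add_const ε).rpow_const (p := p/2) (Or.inl (hpos τ).ne')
    exact this
  -- bound on D
  have hDb : ∀ τ ∈ Set.Icc (0:ℝ) 1, |D τ| ≤ p * ((u τ + ε) ^ ((p-1)/2) * ‖F' τ‖) := by
    intro τ hτ
    have ha : (0:ℝ) ≤ (u τ + ε) ^ (p/2-1) := Real.rpow_nonneg (hpos τ).le _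
    have hFn : ‖F τ‖ ≤ (u τ + ε) ^ ((1:ℝ)/2) := by
      rw [Complex.norm_def, Real.sqrt_eq_rpow]
      exact Real.rpow_le_rpow (Complex.normSq_nonneg _) (by linarith [hε]) (by norm_num)
    have hinner := abs_re_inner_le (F τ) (F' τ)
    calc |D τ| = |2*((F τ).re*(F' τ).re + (F τ).im*(F' τ).im)| * (p/2) * (u τ + ε) ^ (p/2-1) := by
          rw [hD_def]
          rw [abs_mul, abs_mul, _root_.abs_of_nonneg (by positivity : (0:ℝ) ≤ p/2), _root_.abs_of_nonneg ha]
      _ ≤ (2*((u τ + ε) ^ ((1:ℝ)/2) * ‖F' τ‖)) * (p/2) * (u τ + ε) ^ (p/2-1) := by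
          gcongr
          calc |2*((F τ).re*(F' τ).re + (F τ).im*(F' τ).im)|
              = 2 * |(F τ).re*(F' τ).re + (F τ).im*(F' τ).im| := by
                rw [abs_mul]; norm_num
            _ ≤ 2 * (‖F τ‖ * ‖F' τ‖) := by linarith [hinner]
            _ ≤ 2 * ((u τ + ε) ^ ((1:ℝ)/2) * ‖F' τ‖) := by
                have := norm_nonneg (F' τ); nlinarith [norm_nonneg (F τ)]
      _ = p * ((u τ + ε) ^ ((1:ℝ)/2) * (u τ + ε) ^ (p/2-1)) * ‖F' τ‖ := by ring
      _ = p * ((u τ + ε) ^ ((p-1)/2)) * ‖F' τ‖ := by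
          rw [← Real.rpow_add (hpos τ), show (1:ℝ)/2 + (p/2-1) = (p-1)/2 from by ring]
      _ = p * ((u τ + ε) ^ ((p-1)/2) * ‖F' τ‖) := by ring
  -- FTC step
  have key1 : ∀ s ∈ Set.Icc (0:ℝ) 1, g t ≤ g s + p * J := by
    intro s hs
    have hsub : Set.uIcc s t ⊆ Set.Icc (0:ℝ) 1 := Set.uIcc_subset_Icc hs ht
    have hftc : ∫ x in s..t, D x = g t - g s :=
      intervalIntegral.integral_eq_sub_of_hasDerivAt (fun x hx => hgd x (hsub hx))
        ((hDc.mono hsub).intervalIntegrable)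
    have habs : ∀ x, (0:ℝ) ≤ |D x| := fun x => abs_nonneg _
    have hDabsInt : IntegrableOn (fun x => |D x|) (Set.Ioc (0:ℝ) 1) volume := by
      have := ii hDc.abs
      simpa [intervalIntegrable_iff_integrableOn_Ioc_of_le zero_le_one] using this
    have hchain : g t - g s ≤ p * J := by
      calc g t - g s = ∫ x in s..t, D x := hftc.symm
        _ ≤ |∫ x in s..t, D x| := le_abs_self _
        _ ≤ ∫ x in Set.uIoc s t, |D x| := by
            simpa [Real.norm_eq_abs] using
              intervalIntegral.norm_integral_le_integral_norm_uIoc (a := s) (b := t)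
                (f := D) (μ := volume)
        _ ≤ ∫ x in Set.Ioc (0:ℝ) 1, |D x| := by
            apply setIntegral_mono_set hDabsInt (ae_of_all _ habs)
            have : Set.uIoc s t ⊆ Set.Ioc (0:ℝ) 1 := by
              rw [Set.uIoc]
              exact Set.Ioc_subset_Ioc (le_inf hs.1 ht.1) (sup_le hs.2 ht.2)
            exact this.eventuallyLE
        _ = ∫ x in (0:ℝ)..1, |D x| := (intervalIntegral.integral_of_le zero_le_one).symm
        _ ≤ ∫ x in (0:ℝ)..1, p * ((u x + ε) ^ ((p-1)/2) * ‖F' x‖) := by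
            apply intervalIntegral.integral_mono_on zero_le_one (ii hDc.abs)
              (ii (hJc.const_smul p))
            exact hDb
        _ = p * J := by rw [hJ_def, ← intervalIntegral.integral_const_mul]
    linarith
  -- integrate over s
  have key2 : g t ≤ I + p * J := by
    have h1 : ∫ (_ : ℝ) in (0:ℝ)..1, g t = g t := by simp
    have h2 : (∫ (_ : ℝ) in (0:ℝ)..1, g t) ≤ ∫ s in (0:ℝ)..1, (g s + p * J) := by
      apply intervalIntegral.integral_mono_on zero_le_one intervalIntegrable_const
        ((ii hgc).add intervalIntegrable_const)
      exact key1
    rw [h1] at h2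
    rwa [intervalIntegral.integral_add (ii hgc) intervalIntegrable_const,
      intervalIntegral.integral_const, smul_eq_mul, sub_zero, one_mul] at h2
  -- Hölder
  have hJB : J ≤ I ^ ((p-1)/p) * B ^ (1/p) := by
    rcases hp.lt_or_eq with hp1 | hp1
    · have h := holder_Icc hp1 (f := fun τ => (u τ + ε) ^ ((p-1)/2))
        (g := fun τ => ‖F' τ‖)
        (huec.rpow_const (fun x _ => Or.inl (hpos x).ne')) hF'n
        (fun x => Real.rpow_nonneg (hpos x).le _) (fun x => norm_nonneg _)
      have hne : p - 1 ≠ 0 := by linarith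
      have hexp : ∀ τ, ((u τ + ε) ^ ((p-1)/2)) ^ (p/(p-1)) = (u τ + ε) ^ (p/2) := by
        intro τ
        rw [← Real.rpow_mul (hpos τ).le, show (p-1)/2 * (p/(p-1)) = p/2 from by field_simp]
      have hIeq : (∫ τ in (0:ℝ)..1, ((u τ + ε) ^ ((p-1)/2)) ^ (p/(p-1))) = I := by
        rw [hI_def]
        apply intervalIntegral.integral_congr
        intro x _
        exact hexp x
      calc J ≤ (∫ τ in (0:ℝ)..1, ((u τ + ε) ^ ((p-1)/2)) ^ (p/(p-1))) ^ ((p-1)/p)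
            * (∫ τ in (0:ℝ)..1, ‖F' τ‖ ^ p) ^ (1/p) := h
        _ = I ^ ((p-1)/p) * B ^ (1/p) := by rw [hIeq]
    · subst hp1
      have hJ' : J = ∫ τ in (0:ℝ)..1, ‖F' τ‖ := by
        rw [hJ_def]
        apply intervalIntegral.integral_congr
        intro x _
        norm_num
      have hB' : B = ∫ τ in (0:ℝ)..1, ‖F' τ‖ := by
        rw [hB_def]
        apply intervalIntegral.integral_congr
        intro x _
        exact Real.rpow_one _
      rw [hJ', hB']
      norm_num
  -- pointwise lower bound
  have hnorm : ‖F t‖ ^ p ≤ g t := by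
    have h1 : ‖F t‖ ^ p = (u t) ^ (p/2) := by
      rw [Complex.norm_def, Real.sqrt_eq_rpow,
        ← Real.rpow_mul (Complex.normSq_nonneg _), show (1:ℝ)/2*p = p/2 from by ring]
    rw [h1]
    exact Real.rpow_le_rpow (Complex.normSq_nonneg _) (by linarith [hε]) (by positivity)
  calc ‖F t‖ ^ p ≤ g t := hnorm
    _ ≤ I + p * J := key2
    _ ≤ I + p * (I ^ ((p-1)/p) * B ^ (1/p)) := by
        have hp0 : (0:ℝ) ≤ p := by linarith
        nlinarith [hJB]
    _ = I + p * I ^ ((p-1)/p) * B ^ (1/p) := by ring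


/-- a Sobolev-type inequality on `[0,1]`, bounding the supremum of `|F|^p` by
`∫₀¹|F|^p + p (∫₀¹|F|^p)^{(p-1)/p} (∫₀¹|F'|^p)^{1/p}` for continuously differentiable `F`. -/
theorem sup_le_integral_plus_derivative (p : ℝ) (hp : 1 ≤ p) (F F' : ℝ → ℂ)
    (hderiv : ∀ t ∈ Set.Icc (0:ℝ) 1, HasDerivAt F (F' t) t)
    (hcont : ContinuousOn F' (Set.Icc (0:ℝ) 1)) :
    (⨆ t : Set.Icc (0:ℝ) 1, ‖F t‖ ^ p) ≤
      (∫ τ in (0:ℝ)..1, ‖F τ‖ ^ p) +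
        p * (∫ τ in (0:ℝ)..1, ‖F τ‖ ^ p) ^ ((p - 1) / p) *
          (∫ τ in (0:ℝ)..1, ‖F' τ‖ ^ p) ^ (1/p) := by
  haveI : Nonempty (Set.Icc (0:ℝ) 1) := ⟨⟨0, by norm_num⟩⟩
  apply ciSup_le
  rintro ⟨t, ht⟩
  simp only
  set A : ℝ := ∫ τ in (0:ℝ)..1, ‖F τ‖ ^ p with hA_def
  set B : ℝ := ∫ τ in (0:ℝ)..1, ‖F' τ‖ ^ p with hB_def
  set I : ℕ → ℝ :=
    fun n => ∫ τ in (0:ℝ)..1, (Complex.normSq (F τ) + 1/(n+1)) ^ (p/2) with hI_def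
  have hεpos : ∀ n : ℕ, (0:ℝ) < 1/(n+1) := fun n => by positivity
  have hkey : ∀ n : ℕ, ‖F t‖ ^ p ≤ I n + p * (I n) ^ ((p-1)/p) * B ^ (1/p) :=
    fun n => core p hp (1/(n+1)) (hεpos n) F F' hderiv hcont t ht
  have hFc : ContinuousOn F (Set.Icc (0:ℝ) 1) :=
    fun τ hτ => (hderiv τ hτ).continuousAt.continuousWithinAt
  have huc : ContinuousOn (fun τ => Complex.normSq (F τ)) (Set.Icc (0:ℝ) 1) :=
    Complex.continuous_normSq.comp_continuousOn hFc
  have hA' : A = ∫ τ in Set.Ioc (0:ℝ) 1, (Complex.normSq (F τ)) ^ (p/2) := by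
    rw [hA_def, intervalIntegral.integral_of_le zero_le_one]
    apply setIntegral_congr_fun measurableSet_Ioc
    intro x _
    show ‖F x‖ ^ p = Complex.normSq (F x) ^ (p/2)
    rw [Complex.norm_def, Real.sqrt_eq_rpow,
      ← Real.rpow_mul (Complex.normSq_nonneg _), show (1:ℝ)/2*p = p/2 from by ring]
  -- dominated convergence
  have hIA : Filter.Tendsto I Filter.atTop (nhds A) := by
    rw [hA']
    have hI' : I = fun n : ℕ => ∫ τ in Set.Ioc (0:ℝ) 1,
        (Complex.normSq (F τ) + 1/((n:ℝ)+1)) ^ (p/2) := by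
      funext n
      exact intervalIntegral.integral_of_le zero_le_one
    rw [hI']
    apply MeasureTheory.tendsto_integral_of_dominated_convergence
      (bound := fun τ => (Complex.normSq (F τ) + 1) ^ (p/2))
    · intro n
      exact (((huc.add continuousOn_const).rpow_const
        (fun x _ => Or.inr (by positivity))).mono Set.Ioc_subset_Icc_self).aestronglyMeasurable
        measurableSet_Ioc
    · have : IntervalIntegrable (fun τ => (Complex.normSq (F τ) + 1) ^ (p/2)) volume 0 1 := by
        apply ContinuousOn.intervalIntegrable
        rw [Set.uIcc_of_le zero_le_one]
        exact (huc.add continuousOn_const).rpow_const (fun x _ => Or.inr (by positivity))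
      rw [intervalIntegrable_iff_integrableOn_Ioc_of_le zero_le_one] at this
      exact this
    · intro n
      apply ae_of_all
      intro x
      have h0 : (0:ℝ) ≤ Complex.normSq (F x) + 1/(n+1) :=
        add_nonneg (Complex.normSq_nonneg _) (hεpos n).le
      rw [Real.norm_eq_abs, _root_.abs_of_nonneg (Real.rpow_nonneg h0 _)]
      apply Real.rpow_le_rpow h0 _ (by positivity)
      have : (1:ℝ)/(n+1) ≤ 1 := by
        rw [div_le_one (by positivity)]
        linarith [Nat.cast_nonneg (α := ℝ) n]
      linarith
    · apply ae_of_all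
      intro x
      have h1 : Filter.Tendsto (fun n : ℕ => Complex.normSq (F x) + 1/(n+1))
          Filter.atTop (nhds (Complex.normSq (F x) + 0)) :=
        tendsto_const_nhds.add tendsto_one_div_add_atTop_nhds_zero_nat
      rw [add_zero] at h1
      exact ((Real.continuousAt_rpow_const _ (p/2)
        (Or.inr (by positivity))).tendsto.comp h1)
  have h2 : Filter.Tendsto (fun n => (I n) ^ ((p-1)/p)) Filter.atTop
      (nhds (A ^ ((p-1)/p))) :=
    ((Real.continuousAt_rpow_const A ((p-1)/p)
      (Or.inr (div_nonneg (by linarith) (by linarith)))).tendsto.comp hIA)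
  have hRHS : Filter.Tendsto (fun n => I n + p * (I n) ^ ((p-1)/p) * B ^ (1/p))
      Filter.atTop (nhds (A + p * A ^ ((p-1)/p) * B ^ (1/p))) :=
    hIA.add ((tendsto_const_nhds.mul h2).mul tendsto_const_nhds)
  exact ge_of_tendsto hRHS (Filter.Eventually.of_forall hkey)
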